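/- For the cuspidal cubic f = y^2 − x^3 and a prime p, the Igusa generating series J_p(T) = ∑_{n≥0} F_n T^n, where F_n = #{(x,y) ∈ (Z/p^{n+1}Z)^2 : y^2 = x^3}, satisfies J_p(T)·(1 − p^7 T^6)(1 − pT) = p·(1 + (p−1)T + (p^6 − p^5)T^5 − p^7 T^6) as formal power series over Q. -/

import Mathlib

open PowerSeries


section helpers
variable {p : ℕ}

lemma sq1 (hp : p.Prime) {Y : ℤ} (h : (p:ℤ) ∣ Y^2) : (p:ℤ) ∣ Y :=
  (Nat.prime_iff_prime_int.mp hp).dvd_of_dvd_pow h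

lemma sq3 (hp : p.Prime) {Y : ℤ} (h : (p:ℤ)^3 ∣ Y^2) : (p:ℤ)^2 ∣ Y := by
  have hp' := Nat.prime_iff_prime_int.mp hp
  obtain ⟨c, rfl⟩ := sq1 hp (dvd_trans (dvd_pow_self _ three_ne_zero) h)
  have h2 : (p:ℤ) ∣ c^2 := by
    have hne : (p:ℤ)^2 ≠ 0 := pow_ne_zero _ (by exact_mod_cast hp.ne_zero)
    rcases h with ⟨d, hd⟩
    have h3 : (p:ℤ)^2 * c^2 = (p:ℤ)^2 * ((p:ℤ) * d) := by
      have h4 : ((p:ℤ)*c)^2 = (p:ℤ)^2 * c^2 := by ring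
      rw [← h4, hd]; ring
    exact ⟨d, mul_left_cancel₀ hne h3⟩
  obtain ⟨d, rfl⟩ := hp'.dvd_of_dvd_pow h2
  exact ⟨d, by ring⟩

lemma sq5 (hp : p.Prime) {Y : ℤ} (h : (p:ℤ)^5 ∣ Y^2) : (p:ℤ)^3 ∣ Y := by
  have hp' := Nat.prime_iff_prime_int.mp hp
  obtain ⟨c, rfl⟩ := sq3 hp (dvd_trans (pow_dvd_pow _ (by norm_num)) h)
  have h2 : (p:ℤ) ∣ c^2 := by
    have hne : (p:ℤ)^4 ≠ 0 := pow_ne_zero _ (by exact_mod_cast hp.ne_zero)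
    rcases h with ⟨d, hd⟩
    have : (p:ℤ)^4 * c^2 = (p:ℤ)^4 * ((p:ℤ) * d) := by
      have : ((p:ℤ)^2*c)^2 = (p:ℤ)^4 * c^2 := by ring
      rw [← this, hd]; ring
    exact ⟨d, mul_left_cancel₀ hne this⟩
  obtain ⟨d, rfl⟩ := hp'.dvd_of_dvd_pow h2
  exact ⟨d, by ring⟩

lemma sq6 (hp : p.Prime) {Y : ℤ} (h : (p:ℤ)^6 ∣ Y^2) : (p:ℤ)^3 ∣ Y :=
  sq5 hp (dvd_trans (pow_dvd_pow _ (by norm_num)) h)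

lemma cu4 (hp : p.Prime) {X : ℤ} (h : (p:ℤ)^4 ∣ X^3) : (p:ℤ)^2 ∣ X := by
  have hp' := Nat.prime_iff_prime_int.mp hp
  obtain ⟨c, rfl⟩ := hp'.dvd_of_dvd_pow (dvd_trans (dvd_pow_self _ (by norm_num)) h)
  have h2 : (p:ℤ) ∣ c^3 := by
    have hne : (p:ℤ)^3 ≠ 0 := pow_ne_zero _ (by exact_mod_cast hp.ne_zero)
    rcases h with ⟨d, hd⟩
    have : (p:ℤ)^3 * c^3 = (p:ℤ)^3 * ((p:ℤ) * d) := by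
      have : ((p:ℤ)*c)^3 = (p:ℤ)^3 * c^3 := by ring
      rw [← this, hd]; ring
    exact ⟨d, mul_left_cancel₀ hne this⟩
  obtain ⟨d, rfl⟩ := hp'.dvd_of_dvd_pow h2
  exact ⟨d, by ring⟩

end helpers

section trans
variable {p : ℕ}

-- equation in ZMod (p^m) ↔ Int divisibility of vals
lemma eqn_iff (hp : p.Prime) (m : ℕ) (x y : ZMod (p^m)) :
    y^2 = x^3 ↔ ((p:ℤ))^m ∣ (y.val:ℤ)^2 - (x.val:ℤ)^3 := by
  haveI : NeZero (p^m) := ⟨pow_ne_zero _ hp.ne_zero⟩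
  have hx : ((x.val : ℕ) : ZMod (p^m)) = x := by
    rw [ZMod.natCast_val, ZMod.cast_id]
  have hy : ((y.val : ℕ) : ZMod (p^m)) = y := by
    rw [ZMod.natCast_val, ZMod.cast_id]
  constructor
  · intro h
    have : ((y.val^2 : ℕ) : ZMod (p^m)) = ((x.val^3 : ℕ) : ZMod (p^m)) := by
      push_cast [hx, hy]; exact h
    have := (ZMod.natCast_eq_natCast_iff _ _ _).mp this
    have := (Nat.modEq_iff_dvd.mp this)
    -- (p^m : ℤ) ∣ x³ - y²
    have h2 : ((p:ℤ))^m ∣ (x.val:ℤ)^3 - (y.val:ℤ)^2 := by push_cast at this ⊢; exact this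
    have := dvd_neg.mpr h2
    simpa using this
  · intro h
    have h2 : (((p:ℕ)^m : ℕ) : ℤ) ∣ ((x.val^3 : ℕ):ℤ) - ((y.val^2 : ℕ):ℤ) := by
      push_cast
      simpa using dvd_neg.mpr h
    have := (ZMod.natCast_eq_natCast_iff (y.val^2) (x.val^3) (p^m)).mpr
      (Nat.modEq_iff_dvd.mpr h2)
    push_cast [hx, hy] at this
    exact this

-- not unit iff p ∣ val
lemma nonunit_iff (hp : p.Prime) {m : ℕ} (hm : 1 ≤ m) (x : ZMod (p^m)) :
    ¬ IsUnit x ↔ p ∣ x.val := by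
  haveI : NeZero (p^m) := ⟨pow_ne_zero _ hp.ne_zero⟩
  have hx : ((x.val : ℕ) : ZMod (p^m)) = x := by
    rw [ZMod.natCast_val, ZMod.cast_id]
  have hiu : IsUnit x ↔ Nat.Coprime x.val (p^m) := by
    conv_lhs => rw [← hx]
    exact ZMod.isUnit_iff_coprime _ _
  rw [hiu]
  constructor
  · intro h
    have hg := Nat.gcd_dvd_right (x.val) (p^m)
    rcases (Nat.dvd_prime_pow hp).mp hg with ⟨i, hi, hgi⟩
    rcases Nat.eq_zero_or_pos i with h0 | h1
    · exact absurd (by simpa [h0] using hgi) h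
    · have : p ∣ p ^ i := dvd_pow_self p h1.ne'
      rw [← hgi] at this
      exact this.trans (Nat.gcd_dvd_left _ _)
  · intro h hc
    have hd : p ∣ Nat.gcd x.val (p^m) := Nat.dvd_gcd h (dvd_pow_self p (Nat.one_le_iff_ne_zero.mp hm))
    rw [hc] at hd
    exact absurd (Nat.le_of_dvd one_pos hd) (by have := hp.one_lt; omega)
end trans

section unitpart
variable {p : ℕ}

lemma card_unit_part (hp : p.Prime) {m : ℕ} (hm : 1 ≤ m) :
    Nat.card {z : ZMod (p^m) × ZMod (p^m) // z.2^2 = z.1^3 ∧ IsUnit z.1}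
      = p^(m-1) * (p-1) := by
  haveI : NeZero (p^m) := ⟨pow_ne_zero _ hp.ne_zero⟩
  have key : Nat.card {z : ZMod (p^m) × ZMod (p^m) // z.2^2 = z.1^3 ∧ IsUnit z.1}
      = Nat.card (ZMod (p^m))ˣ := by
    refine (Nat.card_eq_of_bijective
      (fun u : (ZMod (p^m))ˣ => ⟨(((u^2 : (ZMod (p^m))ˣ) : ZMod (p^m)),
        ((u^3 : (ZMod (p^m))ˣ) : ZMod (p^m))), by
          constructor
          · push_cast [← pow_mul]; norm_num
          · exact (u^2).isUnit⟩) ?_).symm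
    constructor
    · intro u v huv
      have h := congrArg (fun z => Subtype.val z) huv
      have h2 : u^2 = v^2 := Units.ext (congrArg Prod.fst h)
      have h3 : u^3 = v^3 := Units.ext (congrArg Prod.snd h)
      calc u = u^3 * (u^2)⁻¹ := by group
        _ = v^3 * (v^2)⁻¹ := by rw [h2, h3]
        _ = v := by group
    · rintro ⟨⟨x, y⟩, heq, hx⟩
      have hy : IsUnit y := by
        have h1 : y * y = x^3 := by rw [← heq]; ring
        have : IsUnit (y * y) := by rw [h1]; exact hx.pow 3
        exact isUnit_of_mul_isUnit_left this
      have hinv : (↑hx.unit⁻¹ : ZMod (p^m)) * x = 1 := by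
        exact IsUnit.val_inv_mul hx
      set a : ZMod (p^m) := (↑hx.unit⁻¹ : ZMod (p^m)) with ha
      have g1 : (y * a)^2 = x := by
        have e1 : (y*a)^2 = y^2 * a^2 := by ring
        rw [e1, heq]
        have e2 : x^3 * a^2 = x * (a*x)^2 := by ring
        rw [e2, hinv, one_pow, mul_one]
      have g2 : (y * a)^3 = y := by
        have e1 : (y*a)^3 = y * (y^2 * a^3) := by ring
        rw [e1, heq]
        have e2 : x^3*a^3 = (a*x)^3 := by ring
        rw [e2, hinv, one_pow, mul_one]
      refine ⟨hy.unit * hx.unit⁻¹, Subtype.ext (Prod.ext ?_ ?_)⟩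
      · show (↑((hy.unit * hx.unit⁻¹)^2) : ZMod (p^m)) = x
        push_cast
        rw [hy.unit_spec, ← ha]
        exact g1
      · show (↑((hy.unit * hx.unit⁻¹)^3) : ZMod (p^m)) = y
        push_cast
        rw [hy.unit_spec, ← ha]
        exact g2
  rw [key, Nat.card_eq_fintype_card, ZMod.card_units_eq_totient,
    Nat.totient_prime_pow hp hm]
end unitpart

section chains
variable {p : ℕ}

lemma dvdY2 {X Y : ℤ} {j : ℕ} (h : (p:ℤ)^j ∣ Y^2 - X^3) (hX3 : (p:ℤ)^j ∣ X^3) :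
    (p:ℤ)^j ∣ Y^2 := by
  have := dvd_add h hX3; simpa using this

lemma dvdX3 {X Y : ℤ} {j : ℕ} (h : (p:ℤ)^j ∣ Y^2 - X^3) (hY2 : (p:ℤ)^j ∣ Y^2) :
    (p:ℤ)^j ∣ X^3 := by
  have := dvd_sub hY2 h; simpa using this

lemma chain2 (hp : p.Prime) {X Y : ℤ} (h : (p:ℤ)^2 ∣ Y^2 - X^3) (hX : (p:ℤ) ∣ X) :
    (p:ℤ)^1 ∣ X ∧ (p:ℤ)^1 ∣ Y := by
  refine ⟨by simpa using hX, ?_⟩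
  have hX3 : (p:ℤ) ∣ X^3 := dvd_trans hX (dvd_pow_self X three_ne_zero)
  have h1 : (p:ℤ) ∣ Y^2 - X^3 := (dvd_pow_self (p:ℤ) two_ne_zero).trans h
  have hY2 : (p:ℤ) ∣ Y^2 := by have := dvd_add h1 hX3; simpa using this
  simpa using sq1 hp hY2

lemma chain3 (hp : p.Prime) {X Y : ℤ} (h : (p:ℤ)^3 ∣ Y^2 - X^3) (hX : (p:ℤ) ∣ X) :
    (p:ℤ)^1 ∣ X ∧ (p:ℤ)^2 ∣ Y := by
  have hX3 : (p:ℤ)^3 ∣ X^3 := pow_dvd_pow_of_dvd hX 3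
  exact ⟨by simpa using hX, sq3 hp (dvdY2 h hX3)⟩

lemma chain4 (hp : p.Prime) {X Y : ℤ} (h : (p:ℤ)^4 ∣ Y^2 - X^3) (hX : (p:ℤ) ∣ X) :
    (p:ℤ)^2 ∣ X ∧ (p:ℤ)^2 ∣ Y := by
  have h3 : (p:ℤ)^3 ∣ Y^2 - X^3 := (pow_dvd_pow _ (by norm_num)).trans h
  have hY : (p:ℤ)^2 ∣ Y := (chain3 hp h3 hX).2
  have hY2 : (p:ℤ)^4 ∣ Y^2 := by
    have := pow_dvd_pow_of_dvd hY 2; rwa [← pow_mul] at this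
  exact ⟨cu4 hp (dvdX3 h hY2), hY⟩

lemma chain5 (hp : p.Prime) {X Y : ℤ} (h : (p:ℤ)^5 ∣ Y^2 - X^3) (hX : (p:ℤ) ∣ X) :
    (p:ℤ)^2 ∣ X ∧ (p:ℤ)^3 ∣ Y := by
  have h4 : (p:ℤ)^4 ∣ Y^2 - X^3 := (pow_dvd_pow _ (by norm_num)).trans h
  obtain ⟨hX2, -⟩ := chain4 hp h4 hX
  have hX3 : (p:ℤ)^6 ∣ X^3 := by
    have := pow_dvd_pow_of_dvd hX2 3; rwa [← pow_mul] at this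
  have hY2 : (p:ℤ)^5 ∣ Y^2 := dvdY2 h ((pow_dvd_pow _ (by norm_num)).trans hX3)
  exact ⟨hX2, sq5 hp hY2⟩

lemma chain6 (hp : p.Prime) {X Y : ℤ} (h : (p:ℤ)^6 ∣ Y^2 - X^3) (hX : (p:ℤ) ∣ X) :
    (p:ℤ)^2 ∣ X ∧ (p:ℤ)^3 ∣ Y := by
  have h5 : (p:ℤ)^5 ∣ Y^2 - X^3 := (pow_dvd_pow _ (by norm_num)).trans h
  obtain ⟨hX2, -⟩ := chain5 hp h5 hX
  have hX3 : (p:ℤ)^6 ∣ X^3 := by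
    have := pow_dvd_pow_of_dvd hX2 3; rwa [← pow_mul] at this
  exact ⟨hX2, sq6 hp (dvdY2 h hX3)⟩

end chains

section box
variable {p : ℕ}

lemma sol_iff_box (hp : p.Prime) {m c d : ℕ} (hc1 : 1 ≤ c) (hm : 1 ≤ m)
    (h3c : m ≤ 3*c) (h2d : m ≤ 2*d)
    (forward : ∀ X Y : ℤ, (p:ℤ)^m ∣ Y^2 - X^3 → (p:ℤ) ∣ X →
      (p:ℤ)^c ∣ X ∧ (p:ℤ)^d ∣ Y)
    (z : ZMod (p^m) × ZMod (p^m)) :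
    (z.2^2 = z.1^3 ∧ ¬ IsUnit z.1) ↔ (p^c ∣ z.1.val ∧ p^d ∣ z.2.val) := by
  rw [eqn_iff hp m, nonunit_iff hp hm]
  constructor
  · rintro ⟨h, hX⟩
    have hXi : (p:ℤ) ∣ (z.1.val:ℤ) := Int.natCast_dvd_natCast.mpr hX
    obtain ⟨h1, h2⟩ := forward _ _ h hXi
    constructor
    · exact_mod_cast (Int.natCast_dvd_natCast (m := p^c) (n := z.1.val)).mp (by exact_mod_cast h1)
    · exact_mod_cast (Int.natCast_dvd_natCast (m := p^d) (n := z.2.val)).mp (by exact_mod_cast h2)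
  · rintro ⟨h1, h2⟩
    have h1i : (p:ℤ)^c ∣ (z.1.val:ℤ) := by exact_mod_cast h1
    have h2i : (p:ℤ)^d ∣ (z.2.val:ℤ) := by exact_mod_cast h2
    constructor
    · have hY2 : (p:ℤ)^m ∣ (z.2.val:ℤ)^2 := by
        have := pow_dvd_pow_of_dvd h2i 2
        rw [← pow_mul, Nat.mul_comm] at this
        exact (pow_dvd_pow _ h2d).trans this
      have hX3 : (p:ℤ)^m ∣ (z.1.val:ℤ)^3 := by
        have := pow_dvd_pow_of_dvd h1i 3
        rw [← pow_mul, Nat.mul_comm] at this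
        exact (pow_dvd_pow _ h3c).trans this
      exact dvd_sub hY2 hX3
    · exact dvd_trans (dvd_pow_self p (Nat.one_le_iff_ne_zero.mp hc1)) h1

lemma card_box (hp : p.Prime) {m c d : ℕ} (hc : c ≤ m) (hd : d ≤ m) :
    Nat.card {z : ZMod (p^m) × ZMod (p^m) // p^c ∣ z.1.val ∧ p^d ∣ z.2.val}
      = p^(m-c) * p^(m-d) := by
  haveI : NeZero (p^m) := ⟨pow_ne_zero _ hp.ne_zero⟩
  have hval : ∀ (k : ℕ), k ≤ m → ∀ t : ZMod (p^(m-k)), (p^k * t.val) < p^m := by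
    intro k hk t
    haveI : NeZero (p^(m-k)) := ⟨pow_ne_zero _ hp.ne_zero⟩
    have h1 : t.val < p^(m-k) := ZMod.val_lt t
    calc p^k * t.val < p^k * p^(m-k) :=
          mul_lt_mul_of_pos_left h1 (Nat.pow_pos hp.pos)
      _ = p^m := by rw [← pow_add]; congr 1; omega
  have key : Nat.card (ZMod (p^(m-c)) × ZMod (p^(m-d)))
      = Nat.card {z : ZMod (p^m) × ZMod (p^m) // p^c ∣ z.1.val ∧ p^d ∣ z.2.val} := by
    refine Nat.card_eq_of_bijective
      (fun w => ⟨(((p^c * w.1.val : ℕ) : ZMod (p^m)), ((p^d * w.2.val : ℕ) : ZMod (p^m))),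
        ⟨⟨w.1.val, by rw [ZMod.val_cast_of_lt (hval c hc w.1)]⟩,
         ⟨w.2.val, by rw [ZMod.val_cast_of_lt (hval d hd w.2)]⟩⟩⟩) ⟨?_, ?_⟩
    · intro w w' hww
      have h := congrArg (fun z => Subtype.val z) hww
      have h1 := congrArg (fun z => ZMod.val z.1) h
      have h2 := congrArg (fun z => ZMod.val z.2) h
      simp only [ZMod.val_cast_of_lt (hval c hc w.1), ZMod.val_cast_of_lt (hval c hc w'.1),
        ZMod.val_cast_of_lt (hval d hd w.2), ZMod.val_cast_of_lt (hval d hd w'.2)] at h1 h2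
      have e1 : w.1.val = w'.1.val := Nat.eq_of_mul_eq_mul_left (Nat.pow_pos hp.pos) h1
      have e2 : w.2.val = w'.2.val := Nat.eq_of_mul_eq_mul_left (Nat.pow_pos hp.pos) h2
      have : w.1 = w'.1 := by
        haveI : NeZero (p^(m-c)) := ⟨pow_ne_zero _ hp.ne_zero⟩
        exact ZMod.val_injective _ e1
      have : w.2 = w'.2 := by
        haveI : NeZero (p^(m-d)) := ⟨pow_ne_zero _ hp.ne_zero⟩
        exact ZMod.val_injective _ e2
      exact Prod.ext ‹w.1 = w'.1› ‹w.2 = w'.2›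
    · rintro ⟨⟨x, y⟩, ⟨⟨A, hA⟩, ⟨B, hB⟩⟩⟩
      haveI : NeZero (p^(m-c)) := ⟨pow_ne_zero _ hp.ne_zero⟩
      haveI : NeZero (p^(m-d)) := ⟨pow_ne_zero _ hp.ne_zero⟩
      have hAlt : A < p^(m-c) := by
        have hx : x.val < p^m := ZMod.val_lt x
        rw [hA] at hx
        have : p^c * A < p^c * p^(m-c) := by
          rw [← pow_add]
          calc p^c * A < p^m := hx
            _ = p^(c + (m-c)) := by congr 1; omega
        exact lt_of_mul_lt_mul_left this (Nat.zero_le _)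
      have hBlt : B < p^(m-d) := by
        have hy : y.val < p^m := ZMod.val_lt y
        rw [hB] at hy
        have : p^d * B < p^d * p^(m-d) := by
          rw [← pow_add]
          calc p^d * B < p^m := hy
            _ = p^(d + (m-d)) := by congr 1; omega
        exact lt_of_mul_lt_mul_left this (Nat.zero_le _)
      refine ⟨((A : ZMod (p^(m-c))), (B : ZMod (p^(m-d)))), ?_⟩
      apply Subtype.ext
      apply Prod.ext
      · show ((p^c * ZMod.val ((A : ZMod (p^(m-c)))) : ℕ) : ZMod (p^m)) = x
        rw [ZMod.val_cast_of_lt hAlt, ← hA, ZMod.natCast_val, ZMod.cast_id]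
      · show ((p^d * ZMod.val ((B : ZMod (p^(m-d)))) : ℕ) : ZMod (p^m)) = y
        rw [ZMod.val_cast_of_lt hBlt, ← hB, ZMod.natCast_val, ZMod.cast_id]
  rw [← key, Nat.card_prod, Nat.card_zmod, Nat.card_zmod]
end box

section recursion
variable {p : ℕ}

lemma card_nonunit_rec (hp : p.Prime) (e : ℕ) :
    Nat.card {z : ZMod (p^(e+6)) × ZMod (p^(e+6)) // z.2^2 = z.1^3 ∧ ¬ IsUnit z.1}
      = p^7 * Nat.card {z : ZMod (p^e) × ZMod (p^e) // z.2^2 = z.1^3} := by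
  haveI : NeZero (p^(e+6)) := ⟨pow_ne_zero _ hp.ne_zero⟩
  haveI : NeZero (p^e) := ⟨pow_ne_zero _ hp.ne_zero⟩
  haveI : NeZero (p^(e+4)) := ⟨pow_ne_zero _ hp.ne_zero⟩
  haveI : NeZero (p^(e+3)) := ⟨pow_ne_zero _ hp.ne_zero⟩
  have ppos : 0 < p := hp.pos
  -- bounds
  have hb1 : ∀ (A : ℕ), A < p^e → ∀ i : Fin (p^4), p^2 * (A + p^e * i) < p^(e+6) := by
    intro A hA i
    have : A + p^e * (i:ℕ) < p^(e+4) := by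
      have hi : (i:ℕ) + 1 ≤ p^4 := i.2
      calc A + p^e * (i:ℕ) < p^e + p^e * (i:ℕ) := by omega
        _ = p^e * ((i:ℕ)+1) := by ring
        _ ≤ p^e * p^4 := Nat.mul_le_mul_left _ hi
        _ = p^(e+4) := by rw [← pow_add]
    calc p^2 * (A + p^e * (i:ℕ)) < p^2 * p^(e+4) := by
          exact mul_lt_mul_of_pos_left this (Nat.pow_pos ppos)
      _ = p^(e+6) := by rw [← pow_add]; congr 1; omega
  have hb2 : ∀ (B : ℕ), B < p^e → ∀ j : Fin (p^3), p^3 * (B + p^e * j) < p^(e+6) := by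
    intro B hB j
    have : B + p^e * (j:ℕ) < p^(e+3) := by
      have hj : (j:ℕ) + 1 ≤ p^3 := j.2
      calc B + p^e * (j:ℕ) < p^e + p^e * (j:ℕ) := by omega
        _ = p^e * ((j:ℕ)+1) := by ring
        _ ≤ p^e * p^3 := Nat.mul_le_mul_left _ hj
        _ = p^(e+3) := by rw [← pow_add]
    calc p^3 * (B + p^e * (j:ℕ)) < p^3 * p^(e+3) := by
          exact mul_lt_mul_of_pos_left this (Nat.pow_pos ppos)
      _ = p^(e+6) := by rw [← pow_add]; congr 1; omega
  have key : Nat.card ({z : ZMod (p^e) × ZMod (p^e) // z.2^2 = z.1^3} × (Fin (p^4) × Fin (p^3)))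
      = Nat.card {z : ZMod (p^(e+6)) × ZMod (p^(e+6)) // z.2^2 = z.1^3 ∧ ¬ IsUnit z.1} := by
    refine Nat.card_eq_of_bijective (fun w =>
      ⟨(((p^2 * (w.1.1.1.val + p^e * w.2.1) : ℕ) : ZMod (p^(e+6))),
        ((p^3 * (w.1.1.2.val + p^e * w.2.2) : ℕ) : ZMod (p^(e+6)))), ?_, ?_⟩) ⟨?_, ?_⟩
    · -- equation
      obtain ⟨⟨⟨a, b⟩, hab⟩, i, j⟩ := w
      rw [eqn_iff hp] at hab ⊢
      simp only at hab ⊢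
      rw [ZMod.val_cast_of_lt (hb1 a.val (ZMod.val_lt a) i),
        ZMod.val_cast_of_lt (hb2 b.val (ZMod.val_lt b) j)]
      set A : ℤ := (a.val : ℤ)
      set B : ℤ := (b.val : ℤ)
      set I : ℤ := ((i:ℕ) : ℤ)
      set J : ℤ := ((j:ℕ) : ℤ)
      have expand : ((p:ℤ)^3 * (B + (p:ℤ)^e * J))^2 - ((p:ℤ)^2 * (A + (p:ℤ)^e * I))^3
          = (p:ℤ)^6 * ((B^2 - A^3) + (p:ℤ)^e *
            (2*B*J + (p:ℤ)^e*J^2 - (3*A^2*I + 3*A*((p:ℤ)^e)*I^2 + ((p:ℤ)^e)^2*I^3))) := by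
        ring
      have : ((p^3 * (b.val + p^e * (j:ℕ)) : ℕ) : ℤ)^2 - ((p^2 * (a.val + p^e * (i:ℕ)) : ℕ) : ℤ)^3
          = ((p:ℤ)^3 * (B + (p:ℤ)^e * J))^2 - ((p:ℤ)^2 * (A + (p:ℤ)^e * I))^3 := by
        push_cast; ring
      rw [this, expand]
      have h6 : (p:ℤ)^(e+6) = (p:ℤ)^6 * (p:ℤ)^e := by rw [← pow_add]; congr 1; omega
      rw [h6]
      apply mul_dvd_mul_left
      exact dvd_add hab (Dvd.intro _ rfl)
    · -- nonunit
      rw [nonunit_iff hp (by omega)]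
      simp only
      rw [ZMod.val_cast_of_lt (hb1 w.1.1.1.val (ZMod.val_lt w.1.1.1) w.2.1)]
      exact ⟨p * (w.1.1.1.val + p^e * w.2.1), by ring⟩
    · -- injective
      rintro ⟨⟨⟨a, b⟩, hab⟩, i, j⟩ ⟨⟨⟨a', b'⟩, hab'⟩, i', j'⟩ hww
      have h := congrArg (fun z => Subtype.val z) hww
      have h1 := congrArg (fun z => ZMod.val z.1) h
      have h2 := congrArg (fun z => ZMod.val z.2) h
      simp only [ZMod.val_cast_of_lt (hb1 a.val (ZMod.val_lt a) i),
        ZMod.val_cast_of_lt (hb1 a'.val (ZMod.val_lt a') i'),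
        ZMod.val_cast_of_lt (hb2 b.val (ZMod.val_lt b) j),
        ZMod.val_cast_of_lt (hb2 b'.val (ZMod.val_lt b') j')] at h1 h2
      have e1 : a.val + p^e * (i:ℕ) = a'.val + p^e * (i':ℕ) :=
        Nat.eq_of_mul_eq_mul_left (Nat.pow_pos ppos) h1
      have e2 : b.val + p^e * (j:ℕ) = b'.val + p^e * (j':ℕ) :=
        Nat.eq_of_mul_eq_mul_left (Nat.pow_pos ppos) h2
      have hAa : a.val = a'.val := by
        have l1 := Nat.add_mul_mod_self_left a.val (p^e) (i:ℕ)
        have l2 := Nat.add_mul_mod_self_left a'.val (p^e) (i':ℕ)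
        rw [Nat.mod_eq_of_lt (ZMod.val_lt a)] at l1
        rw [Nat.mod_eq_of_lt (ZMod.val_lt a')] at l2
        rw [← l1, ← l2, e1]
      have hBb : b.val = b'.val := by
        have l1 := Nat.add_mul_mod_self_left b.val (p^e) (j:ℕ)
        have l2 := Nat.add_mul_mod_self_left b'.val (p^e) (j':ℕ)
        rw [Nat.mod_eq_of_lt (ZMod.val_lt b)] at l1
        rw [Nat.mod_eq_of_lt (ZMod.val_lt b')] at l2
        rw [← l1, ← l2, e2]
      have hii : (i:ℕ) = (i':ℕ) := by
        have h' := e1; rw [hAa] at h'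
        have h'' : p^e * (i:ℕ) = p^e * (i':ℕ) := by omega
        exact Nat.eq_of_mul_eq_mul_left (Nat.pow_pos ppos) h''
      have hjj : (j:ℕ) = (j':ℕ) := by
        have h' := e2; rw [hBb] at h'
        have h'' : p^e * (j:ℕ) = p^e * (j':ℕ) := by omega
        exact Nat.eq_of_mul_eq_mul_left (Nat.pow_pos ppos) h''
      refine Prod.ext (Subtype.ext (Prod.ext ?_ ?_)) (Prod.ext ?_ ?_)
      · exact ZMod.val_injective _ hAa
      · exact ZMod.val_injective _ hBb
      · exact Fin.ext hii
      · exact Fin.ext hjj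
    · -- surjective
      rintro ⟨⟨x, y⟩, heq, hnu⟩
      rw [eqn_iff hp] at heq
      rw [nonunit_iff hp (by omega)] at hnu
      simp only at heq hnu
      have hXi : (p:ℤ) ∣ (x.val:ℤ) := Int.natCast_dvd_natCast.mpr hnu
      have h6 : (p:ℤ)^6 ∣ (y.val:ℤ)^2 - (x.val:ℤ)^3 :=
        (pow_dvd_pow _ (by omega)).trans heq
      obtain ⟨hX2, hY3⟩ := chain6 hp h6 hXi
      have hX2n : p^2 ∣ x.val := by exact_mod_cast hX2
      have hY3n : p^3 ∣ y.val := by exact_mod_cast hY3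
      obtain ⟨A₀, hA₀⟩ := hX2n
      obtain ⟨B₀, hB₀⟩ := hY3n
      have hA₀lt : A₀ < p^(e+4) := by
        have hx := ZMod.val_lt x
        rw [hA₀] at hx
        have : p^2 * A₀ < p^2 * p^(e+4) := by
          calc p^2 * A₀ < p^(e+6) := hx
            _ = p^2 * p^(e+4) := by rw [← pow_add]; congr 1; omega
        exact lt_of_mul_lt_mul_left this (Nat.zero_le _)
      have hB₀lt : B₀ < p^(e+3) := by
        have hy := ZMod.val_lt y
        rw [hB₀] at hy
        have : p^3 * B₀ < p^3 * p^(e+3) := by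
          calc p^3 * B₀ < p^(e+6) := hy
            _ = p^3 * p^(e+3) := by rw [← pow_add]; congr 1; omega
        exact lt_of_mul_lt_mul_left this (Nat.zero_le _)
      -- the solution mod p^e
      have hdvd_e : (p:ℤ)^e ∣ (B₀:ℤ)^2 - (A₀:ℤ)^3 := by
        have hne : ((p:ℤ)^6 : ℤ) ≠ 0 := pow_ne_zero _ (by exact_mod_cast hp.ne_zero)
        have : (y.val:ℤ)^2 - (x.val:ℤ)^3 = (p:ℤ)^6 * ((B₀:ℤ)^2 - (A₀:ℤ)^3) := by
          rw [hA₀, hB₀]; push_cast; ring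
        rw [this] at heq
        have h6e : (p:ℤ)^(e+6) = (p:ℤ)^6 * (p:ℤ)^e := by rw [← pow_add]; congr 1; omega
        rw [h6e] at heq
        exact (mul_dvd_mul_iff_left hne).mp heq
      have hsol : ((B₀ : ZMod (p^e)))^2 = ((A₀ : ZMod (p^e)))^3 := by
        have : ((B₀^2 : ℕ) : ZMod (p^e)) = ((A₀^3 : ℕ) : ZMod (p^e)) := by
          rw [ZMod.natCast_eq_natCast_iff]
          rw [Nat.modEq_iff_dvd]
          push_cast
          have := dvd_neg.mpr hdvd_e
          simpa using this
        push_cast at this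
        exact this
      refine ⟨⟨⟨(((A₀:ℕ) : ZMod (p^e)), ((B₀:ℕ) : ZMod (p^e))), hsol⟩,
        (⟨A₀ / p^e, ?_⟩, ⟨B₀ / p^e, ?_⟩)⟩, ?_⟩
      · apply Nat.div_lt_of_lt_mul
        calc A₀ < p^(e+4) := hA₀lt
          _ = p^e * p^4 := by rw [← pow_add]
      · apply Nat.div_lt_of_lt_mul
        calc B₀ < p^(e+3) := hB₀lt
          _ = p^e * p^3 := by rw [← pow_add]
      · apply Subtype.ext
        apply Prod.ext
        · show ((p^2 * (ZMod.val ((A₀ : ZMod (p^e))) + p^e * (A₀ / p^e)) : ℕ) : ZMod (p^(e+6))) = x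
          rw [ZMod.val_natCast, Nat.mod_add_div A₀ (p^e), ← hA₀, ZMod.natCast_val, ZMod.cast_id]
        · show ((p^3 * (ZMod.val ((B₀ : ZMod (p^e))) + p^e * (B₀ / p^e)) : ℕ) : ZMod (p^(e+6))) = y
          rw [ZMod.val_natCast, Nat.mod_add_div B₀ (p^e), ← hB₀, ZMod.natCast_val, ZMod.cast_id]
  rw [← key, Nat.card_prod, Nat.card_prod, Nat.card_eq_fintype_card (α := Fin (p^4)),
    Nat.card_eq_fintype_card (α := Fin (p^3)), Fintype.card_fin, Fintype.card_fin]
  rw [← pow_add]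
  ring
end recursion

section assemble
variable {p : ℕ}

lemma chain1 (hp : p.Prime) {X Y : ℤ} (h : (p:ℤ)^1 ∣ Y^2 - X^3) (hX : (p:ℤ) ∣ X) :
    (p:ℤ)^1 ∣ X ∧ (p:ℤ)^1 ∣ Y := by
  refine ⟨by simpa using hX, ?_⟩
  have hX3 : (p:ℤ)^1 ∣ X^3 := by
    simpa using dvd_trans hX (dvd_pow_self X three_ne_zero)
  simpa using sq1 hp (by simpa using dvdY2 h hX3)

lemma card_split (hp : p.Prime) (m : ℕ) :
    Nat.card {z : ZMod (p^m) × ZMod (p^m) // z.2^2 = z.1^3}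
      = Nat.card {z : ZMod (p^m) × ZMod (p^m) // z.2^2 = z.1^3 ∧ IsUnit z.1}
        + Nat.card {z : ZMod (p^m) × ZMod (p^m) // z.2^2 = z.1^3 ∧ ¬ IsUnit z.1} := by
  haveI : NeZero (p^m) := ⟨pow_ne_zero _ hp.ne_zero⟩
  haveI : Fintype (ZMod (p^m)) := ZMod.fintype _
  rw [← Nat.card_congr (Equiv.subtypeSubtypeEquivSubtypeInter
    (fun z : ZMod (p^m) × ZMod (p^m) => z.2^2 = z.1^3) (fun z => IsUnit z.1)),
    ← Nat.card_congr (Equiv.subtypeSubtypeEquivSubtypeInter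
    (fun z : ZMod (p^m) × ZMod (p^m) => z.2^2 = z.1^3) (fun z => ¬ IsUnit z.1))]
  rw [Nat.card_eq_fintype_card, Nat.card_eq_fintype_card, Nat.card_eq_fintype_card]
  classical
  rw [Fintype.card_subtype_compl]
  have hle := Fintype.card_subtype_le (fun z : {z : ZMod (p^m) × ZMod (p^m) // z.2^2 = z.1^3} => IsUnit z.val.1)
  omega

lemma card_nonunit_small (hp : p.Prime) {m c d : ℕ} (hc1 : 1 ≤ c) (hm : 1 ≤ m)
    (hc : c ≤ m) (hd : d ≤ m) (h3c : m ≤ 3*c) (h2d : m ≤ 2*d)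
    (forward : ∀ X Y : ℤ, (p:ℤ)^m ∣ Y^2 - X^3 → (p:ℤ) ∣ X →
      (p:ℤ)^c ∣ X ∧ (p:ℤ)^d ∣ Y) :
    Nat.card {z : ZMod (p^m) × ZMod (p^m) // z.2^2 = z.1^3 ∧ ¬ IsUnit z.1}
      = p^(m-c) * p^(m-d) := by
  rw [Nat.card_congr (Equiv.subtypeEquivRight (sol_iff_box hp hc1 hm h3c h2d forward))]
  exact card_box hp hc hd

lemma Nval (hp : p.Prime) {m c d : ℕ} (hc1 : 1 ≤ c) (hm : 1 ≤ m)
    (hc : c ≤ m) (hd : d ≤ m) (h3c : m ≤ 3*c) (h2d : m ≤ 2*d)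
    (forward : ∀ X Y : ℤ, (p:ℤ)^m ∣ Y^2 - X^3 → (p:ℤ) ∣ X →
      (p:ℤ)^c ∣ X ∧ (p:ℤ)^d ∣ Y) :
    Nat.card {z : ZMod (p^m) × ZMod (p^m) // z.2^2 = z.1^3}
      = p^(m-1) * (p-1) + p^(m-c) * p^(m-d) := by
  rw [card_split hp m, card_unit_part hp hm,
    card_nonunit_small hp hc1 hm hc hd h3c h2d forward]

lemma Nrec (hp : p.Prime) (e : ℕ) :
    Nat.card {z : ZMod (p^(e+6)) × ZMod (p^(e+6)) // z.2^2 = z.1^3}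
      = p^(e+5) * (p-1)
        + p^7 * Nat.card {z : ZMod (p^e) × ZMod (p^e) // z.2^2 = z.1^3} := by
  rw [card_split hp (e+6), card_unit_part hp (by omega), card_nonunit_rec hp e]
  norm_num

end assemble


/-- For `f = y² − x³`, with `F n` the number of solutions of `y² ≡ x³ (mod p^(n+1))`
in `(ℤ/p^(n+1)ℤ)²`, the Igusa generating series `J_p(T) = ∑ Fₙ Tⁿ` satisfies
`J_p(T)·(1 − p⁷T⁶)(1 − pT) = p·(1 + (p−1)T + (p⁶−p⁵)T⁵ − p⁷T⁶)` in `ℚ[[T]]`. -/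
theorem stmt_13 (p : ℕ) (hp : p.Prime)
    (F : ℕ → ℕ)
    (hF : ∀ n, F n =
      Nat.card {z : ZMod (p ^ (n + 1)) × ZMod (p ^ (n + 1)) // z.2 ^ 2 = z.1 ^ 3}) :
    (PowerSeries.mk fun n => (F n : ℚ)) *
        ((1 - C ((p : ℚ) ^ 7) * X ^ 6) * (1 - C (p : ℚ) * X)) =
      C (p : ℚ) *
        (1 + C ((p : ℚ) - 1) * X + C ((p : ℚ) ^ 6 - (p : ℚ) ^ 5) * X ^ 5 -
          C ((p : ℚ) ^ 7) * X ^ 6) := by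
  have hc1 : (1:ℚ) ≤ p := by exact_mod_cast hp.one_le
  -- values
  have q0 : (F 0 : ℚ) = p := by
    rw [hF 0, Nval hp (m := 0+1) (c := 1) (d := 1) le_rfl (by omega) (by omega) (by omega)
      (by omega) (by omega) (fun X Y h hX => chain1 hp (by simpa using h) hX)]
    push_cast [Nat.cast_sub hp.one_le]
    norm_num
  have q1 : (F 1 : ℚ) = (p:ℚ)*((p:ℚ)-1) + (p:ℚ)^2 := by
    rw [hF 1, Nval hp (m := 1+1) (c := 1) (d := 1) le_rfl (by omega) (by omega) (by omega)
      (by omega) (by omega) (fun X Y h hX => chain2 hp (by simpa using h) hX)]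
    push_cast [Nat.cast_sub hp.one_le]
    norm_num
    try ring
  have q2 : (F 2 : ℚ) = (p:ℚ)^2*((p:ℚ)-1) + (p:ℚ)^3 := by
    rw [hF 2, Nval hp (m := 2+1) (c := 1) (d := 2) le_rfl (by omega) (by omega) (by omega)
      (by omega) (by omega) (fun X Y h hX => chain3 hp (by simpa using h) hX)]
    push_cast [Nat.cast_sub hp.one_le]
    norm_num
    try ring
  have q3 : (F 3 : ℚ) = (p:ℚ)^3*((p:ℚ)-1) + (p:ℚ)^4 := by
    rw [hF 3, Nval hp (m := 3+1) (c := 2) (d := 2) (by omega) (by omega) (by omega) (by omega)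
      (by omega) (by omega) (fun X Y h hX => chain4 hp (by simpa using h) hX)]
    push_cast [Nat.cast_sub hp.one_le]
    norm_num
    try ring
  have q4 : (F 4 : ℚ) = (p:ℚ)^4*((p:ℚ)-1) + (p:ℚ)^5 := by
    rw [hF 4, Nval hp (m := 4+1) (c := 2) (d := 3) (by omega) (by omega) (by omega) (by omega)
      (by omega) (by omega) (fun X Y h hX => chain5 hp (by simpa using h) hX)]
    push_cast [Nat.cast_sub hp.one_le]
    norm_num
    try ring
  have q5 : (F 5 : ℚ) = (p:ℚ)^5*((p:ℚ)-1) + (p:ℚ)^7 := by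
    rw [hF 5, Nval hp (m := 5+1) (c := 2) (d := 3) (by omega) (by omega) (by omega) (by omega)
      (by omega) (by omega) (fun X Y h hX => chain6 hp (by simpa using h) hX)]
    push_cast [Nat.cast_sub hp.one_le]
    norm_num
    try ring
  have qrec : ∀ k : ℕ, (F (k+6) : ℚ) = (p:ℚ)^(k+6)*((p:ℚ)-1) + (p:ℚ)^7 * (F k : ℚ) := by
    intro k
    rw [hF (k+6), hF k, show k+6+1 = (k+1)+6 from by omega, Nrec hp (k+1)]
    push_cast [Nat.cast_sub hp.one_le]
    rw [show k+1+5 = k+6 from by omega]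
    try ring
  -- power series computation
  set Φ : PowerSeries ℚ := PowerSeries.mk fun n => (F n : ℚ) with hΦ
  have key : ∀ (a : ℚ) (k n : ℕ), (coeff n) (Φ * (C a * X^k))
      = if k ≤ n then a * (F (n-k) : ℚ) else 0 := by
    intro a k n
    have h1 : Φ * (C a * X^k) = C a * (Φ * X^k) := by ring
    rw [h1, coeff_C_mul, coeff_mul_X_pow']
    split
    · rw [hΦ, coeff_mk]
    · rw [mul_zero]
  have expand : Φ * ((1 - C ((p:ℚ)^7) * X^6) * (1 - C (p:ℚ) * X))
      = Φ - Φ * (C (p:ℚ) * X^1) - Φ * (C ((p:ℚ)^7) * X^6)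
        + Φ * (C ((p:ℚ)^8) * X^7) := by
    rw [show ((p:ℚ)^8) = (p:ℚ)^7 * (p:ℚ) from by ring, map_mul]
    ring
  rw [expand]
  ext n
  rw [map_add, map_sub, map_sub, key, key, key]
  simp only [mul_sub, mul_add, mul_one, map_sub, map_add, sub_mul, add_mul, coeff_C_mul,
    PowerSeries.coeff_C, coeff_one, coeff_X, coeff_X_pow, hΦ, coeff_mk]
  rcases n with _|_|_|_|_|_|_|k
  · norm_num [q0]
  · norm_num [q0, q1]; ring
  · norm_num [q1, q2]; ring
  · norm_num [q2, q3]; ring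
  · norm_num [q3, q4]; ring
  · norm_num [q4, q5]; ring
  · have q6 := qrec 0
    norm_num [q0, q5] at q6 ⊢
    try rw [q6]
    try ring
  · have e1 : k+7 = (k+1)+6 := by omega
    have e2 : k+6 = k+6 := rfl
    rw [if_pos (by omega : 1 ≤ k+7), if_pos (by omega : 6 ≤ k+7), if_pos (by omega : 7 ≤ k+7),
      if_neg (by omega : ¬ (k+7 = 0)), if_neg (by omega : ¬ (k+7 = 1)),
      if_neg (by omega : ¬ (k+7 = 5)), if_neg (by omega : ¬ (k+7 = 6))]
    simp only [mul_zero, mul_one, add_zero, sub_zero, zero_add]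
    rw [show k+7-1 = k+6 from by omega, show k+7-6 = k+1 from by omega,
      show k+7-7 = k from by omega]
    rw [show k+7 = (k+1)+6 from by omega, qrec (k+1), qrec k]
    ring
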